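/- Let A, Ã : X → Y be linear maps between finite-dimensional real vector spaces, and let Z ≠ X be a subspace of X containing ker A + ker Ã. If Ax and Ãx are linearly dependent for every x ∈ X \ Z, then Ã = αA for some nonzero real α. -/
import Mathlib


/-- If `A, B : X → Y` are linear maps between finite-dimensional real
vector spaces, `Z ≠ X` is a subspace containing `ker A + ker B`, and `A x`, `B x`
are linearly dependent for every `x ∉ Z`, then `B = α • A` for some `α ≠ 0`. -/
theorem stmt0 {X Y : Type*} [AddCommGroup X] [Module ℝ X] [FiniteDimensional ℝ X]
    [AddCommGroup Y] [Module ℝ Y] [FiniteDimensional ℝ Y]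
    (A B : X →ₗ[ℝ] Y) (Z : Submodule ℝ X) (hZ : Z ≠ ⊤)
    (hker : LinearMap.ker A ⊔ LinearMap.ker B ≤ Z)
    (hdep : ∀ x : X, x ∉ Z → ∃ a b : ℝ, ¬(a = 0 ∧ b = 0) ∧ a • A x + b • B x = 0) :
    ∃ α : ℝ, α ≠ 0 ∧ B = α • A := by
  have hA : ∀ x : X, x ∉ Z → A x ≠ 0 := by
    intro x hx hax
    exact hx (hker (Submodule.mem_sup_left (LinearMap.mem_ker.mpr hax)))
  have hB : ∀ x : X, x ∉ Z → B x ≠ 0 := by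
    intro x hx hbx
    exact hx (hker (Submodule.mem_sup_right (LinearMap.mem_ker.mpr hbx)))
  -- scalar form of the dependence hypothesis
  have hdep' : ∀ x : X, x ∉ Z → ∃ c : ℝ, c ≠ 0 ∧ B x = c • A x := by
    intro x hx
    obtain ⟨a, b, hab, heq⟩ := hdep x hx
    have hb : b ≠ 0 := by
      rintro rfl
      simp only [zero_smul, add_zero] at heq
      rcases smul_eq_zero.mp heq with h | h
      · exact hab ⟨h, rfl⟩
      · exact hA x hx h
    have h1 : b • B x = (-a) • A x := by
      rw [neg_smul]
      rw [add_comm] at heq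
      exact eq_neg_of_add_eq_zero_left heq
    have hBx : B x = (-a / b) • A x := by
      apply smul_right_injective Y hb
      show b • B x = b • ((-a / b) • A x)
      rw [h1, smul_smul, mul_div_cancel₀ _ hb]
    refine ⟨-a / b, ?_, hBx⟩
    intro h0
    exact hB x hx (by rw [hBx, h0, zero_smul])
  -- a point outside Z
  obtain ⟨x₀, hx₀⟩ : ∃ x : X, x ∉ Z := by
    by_contra h
    push_neg at h
    exact hZ (Submodule.eq_top_iff'.mpr h)
  have addnot : ∀ {x z : X}, z ∈ Z → x ∉ Z → x + z ∉ Z := by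
    intro x z hz hx hmem
    exact hx (by simpa using Z.sub_mem hmem hz)
  obtain ⟨α, hα, hBx₀⟩ := hdep' x₀ hx₀
  -- the kernel of A is contained in the kernel of B
  have hkerB : ∀ w : X, A w = 0 → B w = 0 := by
    intro w hw
    have hwZ : w ∈ Z := hker (Submodule.mem_sup_left (LinearMap.mem_ker.mpr hw))
    obtain ⟨γ, hγ, hB1⟩ := hdep' _ (addnot hwZ hx₀)
    have hBw : B w = (γ - α) • A x₀ := by
      rw [map_add, map_add, hw, add_zero, hBx₀] at hB1
      rw [sub_smul]
      rw [eq_sub_iff_add_eq, add_comm]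
      exact hB1
    by_cases hγα : γ = α
    · rw [hBw, hγα, sub_self, zero_smul]
    · exfalso
      have hμ : γ - α ≠ 0 := sub_ne_zero.mpr hγα
      have hkB : B ((γ - α) • x₀ - α • w) = 0 := by
        rw [map_sub, map_smul, map_smul, hBw, hBx₀, smul_smul, smul_smul,
          mul_comm, sub_self]
      have hmem : (γ - α) • x₀ - α • w ∈ Z :=
        hker (Submodule.mem_sup_right (LinearMap.mem_ker.mpr hkB))
      have h2 : (γ - α) • x₀ ∈ Z := by
        have := Z.add_mem hmem (Z.smul_mem α hwZ)
        simpa using this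
      have : x₀ ∈ Z := by
        have := Z.smul_mem (γ - α)⁻¹ h2
        rwa [smul_smul, inv_mul_cancel₀ hμ, one_smul] at this
      exact hx₀ this
  -- main claim
  have main : ∀ x : X, x ∉ Z → B x = α • A x := by
    intro x hx
    obtain ⟨β, hβ, hBx⟩ := hdep' x hx
    by_cases hc : ∃ c : ℝ, A x = c • A x₀
    · obtain ⟨c, hcx⟩ := hc
      have hw : A (x - c • x₀) = 0 := by
        rw [map_sub, map_smul, hcx, sub_self]
      have hb0 := hkerB _ hw
      rw [map_sub, map_smul, sub_eq_zero] at hb0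
      rw [hb0, hBx₀, hcx, smul_smul, smul_smul, mul_comm]
    · push_neg at hc
      have hind : ∀ s u : ℝ, s • A x₀ + u • A x = 0 → s = 0 ∧ u = 0 := by
        intro s u h
        by_cases hu : u = 0
        · subst hu
          rw [zero_smul, add_zero] at h
          rcases smul_eq_zero.mp h with h' | h'
          · exact ⟨h', rfl⟩
          · exact absurd h' (hA x₀ hx₀)
        · exfalso
          apply hc (-s / u)
          apply smul_right_injective Y hu
          show u • A x = u • ((-s / u) • A x₀)
          rw [smul_smul, mul_div_cancel₀ _ hu, neg_smul]
          rw [add_comm] at h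
          exact eq_neg_of_add_eq_zero_left h
      have ht : ∃ t : ℝ, t ≠ 0 ∧ x₀ + t • x ∉ Z := by
        by_cases h1 : x₀ + x ∈ Z
        · refine ⟨2, two_ne_zero, fun h2 => hx ?_⟩
          have := Z.sub_mem h2 h1
          simpa [two_smul, add_sub_add_comm] using this
        · exact ⟨1, one_ne_zero, by simpa using h1⟩
      obtain ⟨t, ht0, htZ⟩ := ht
      obtain ⟨γ, hγ, hBt⟩ := hdep' _ htZ
      have e1 : α • A x₀ + (t * β) • A x = γ • A x₀ + (t * γ) • A x := by
        rw [map_add, map_add, map_smul, map_smul, hBx₀, hBx, smul_add, smul_smul,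
          smul_smul, mul_comm γ t] at hBt
        exact hBt
      have e2 : (α - γ) • A x₀ + (t * (β - γ)) • A x = 0 := by
        rw [sub_smul, mul_sub, sub_smul]
        rw [show (α • A x₀ - γ • A x₀) + ((t * β) • A x - (t * γ) • A x)
          = (α • A x₀ + (t * β) • A x) - (γ • A x₀ + (t * γ) • A x) by abel]
        rw [e1, sub_self]
      obtain ⟨hs, hu⟩ := hind _ _ e2
      have hβγ : β = γ := by
        rcases mul_eq_zero.mp hu with h | h
        · exact absurd h ht0
        · exact sub_eq_zero.mp h
      have hαγ : α = γ := sub_eq_zero.mp hs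
      rw [hBx, hβγ, ← hαγ]
  refine ⟨α, hα, ?_⟩
  ext x
  simp only [LinearMap.smul_apply]
  by_cases hx : x ∈ Z
  · have e := main _ (addnot hx hx₀)
    rw [map_add, map_add, smul_add, hBx₀] at e
    exact add_left_cancel e
  · exact main x hx
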